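/- For every odd n ≥ 3, the complete graph K_n admits a path decomposition into at most (n+1)/2 paths. -/

import Mathlib

open SimpleGraph
namespace GallaiAux
open List

variable {n : ℕ}

def listWalk (u : Fin n) : List (Fin n) → Σ v : Fin n, (⊤ : SimpleGraph (Fin n)).Walk u v
  | [] => ⟨u, SimpleGraph.Walk.nil⟩
  | v :: l =>
    if h : u = v then ⟨u, SimpleGraph.Walk.nil⟩
    else ⟨(listWalk v l).1, SimpleGraph.Walk.cons (by simp [h]) (listWalk v l).2⟩

lemma listWalk_support (u : Fin n) (l : List (Fin n)) (h : List.Chain (· ≠ ·) u l) :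
    (listWalk u l).2.support = u :: l := by
  induction l generalizing u with
  | nil => rfl
  | cons v t ih =>
    rw [List.Chain, List.isChain_cons_cons] at h
    rw [listWalk, dif_neg h.1]
    simp [ih v h.2]

lemma listWalk_length (u : Fin n) (l : List (Fin n)) (h : List.Chain (· ≠ ·) u l) :
    (listWalk u l).2.length = l.length := by
  have := congrArg List.length (listWalk_support u l h)
  simpa [SimpleGraph.Walk.length_support] using this

lemma listWalk_isPath (u : Fin n) (l : List (Fin n)) (h : (u :: l).Nodup) :
    (listWalk u l).2.IsPath := by
  have hc : List.Chain (· ≠ ·) u l := List.Pairwise.chain h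
  rw [SimpleGraph.Walk.isPath_def, listWalk_support u l hc]
  exact h

lemma listWalk_edges_prop (Q : Sym2 (Fin n) → Prop) (u : Fin n) (l : List (Fin n))
    (h : List.Chain (· ≠ ·) u l) (hQ : List.Chain (fun a b => Q s(a, b)) u l) :
    ∀ e ∈ (listWalk u l).2.edges, Q e := by
  induction l generalizing u with
  | nil => simp [listWalk]
  | cons v t ih =>
    rw [List.Chain, List.isChain_cons_cons] at h hQ
    rw [listWalk, dif_neg h.1]
    simp only [SimpleGraph.Walk.edges_cons]
    intro e he
    rcases List.mem_cons.mp he with rfl | he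
    · exact hQ.1
    · exact ih v h.2 hQ.2 e he



section Main

variable (k : ℕ) [NeZero k]

instance : NeZero (2 * k) := ⟨by have := NeZero.ne k; omega⟩

/-- The extra vertex `∞`. -/
def inf : Fin (2 * k + 1) := Fin.last (2 * k)

/-- Embedding of `ZMod (2k)` into `Fin (2k+1)`. -/
def emb (a : ZMod (2 * k)) : Fin (2 * k + 1) := ⟨a.val, by have := ZMod.val_lt a; omega⟩

lemma emb_inj {a b : ZMod (2 * k)} (h : emb k a = emb k b) : a = b :=
  ZMod.val_injective _ (congrArg Fin.val h)

lemma emb_ne_inf (a : ZMod (2 * k)) : emb k a ≠ inf k := by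
  intro h
  have h1 := congrArg Fin.val h
  have h2 := ZMod.val_lt a
  simp [emb, inf, Fin.last] at h1
  omega

lemma cast_inj_nat {a b : ℕ} (ha : a < 2 * k) (hb : b < 2 * k)
    (h : (a : ZMod (2 * k)) = b) : a = b := by
  have := (ZMod.natCast_eq_natCast_iff' a b (2 * k)).mp h
  rwa [Nat.mod_eq_of_lt ha, Nat.mod_eq_of_lt hb] at this

/-- The zig-zag enumeration `i, i+1, i-1, i+2, i-2, ...` of `ZMod (2k)`. -/
def zig (i : ZMod (2 * k)) (m : ℕ) : ZMod (2 * k) :=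
  if m % 2 = 0 then i - (m / 2 : ℕ) else i + (m / 2 + 1 : ℕ)

lemma zig_injOn (i : ZMod (2 * k)) {m₁ m₂ : ℕ} (h₁ : m₁ < 2 * k) (h₂ : m₂ < 2 * k)
    (h : zig k i m₁ = zig k i m₂) : m₁ = m₂ := by
  have hk := NeZero.ne k
  unfold zig at h
  have key : ∀ a b : ℕ, a < 2 * k → b < 2 * k →
      (i - (a / 2 : ℕ) = i + (b / 2 + 1 : ℕ)) → a % 2 = 0 → b % 2 = 1 → False := by
    intro a b ha hb hab hae hbo
    have h0 : ((a / 2 + (b / 2 + 1) : ℕ) : ZMod (2 * k)) = 0 := by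
      push_cast at hab ⊢
      linear_combination -hab
    rw [ZMod.natCast_eq_zero_iff] at h0
    have := Nat.le_of_dvd (by omega) h0
    omega
  rcases Nat.mod_two_eq_zero_or_one m₁ with hm₁ | hm₁ <;>
    rcases Nat.mod_two_eq_zero_or_one m₂ with hm₂ | hm₂
  · rw [if_pos hm₁, if_pos hm₂] at h
    have h' := sub_right_injective h
    have := cast_inj_nat k (by omega) (by omega) h'
    omega
  · rw [if_pos hm₁, if_neg (by omega : ¬ m₂ % 2 = 0)] at h
    exact absurd (key m₁ m₂ h₁ h₂ h hm₁ hm₂) (by simp)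
  · rw [if_neg (by omega : ¬ m₁ % 2 = 0), if_pos hm₂] at h
    exact absurd (key m₂ m₁ h₂ h₁ h.symm hm₂ hm₁) (by simp)
  · rw [if_neg (by omega : ¬ m₁ % 2 = 0), if_neg (by omega : ¬ m₂ % 2 = 0)] at h
    have h' := add_left_cancel h
    have := cast_inj_nat k (by omega) (by omega) h'
    omega

lemma zig_zero (i : ZMod (2 * k)) : zig k i 0 = i := by simp [zig]

lemma zig_one (i : ZMod (2 * k)) : zig k i 1 = i + 1 := by norm_num [zig]

lemma zig_last (i : ZMod (2 * k)) : zig k i (2 * k - 1) = i + (k : ℕ) := by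
  have hk := NeZero.ne k
  have h1 : (2 * k - 1) % 2 = 1 := by omega
  have h2 : (2 * k - 1) / 2 + 1 = k := by omega
  rw [zig, if_neg (by omega), h2]

lemma zig_sum (i : ZMod (2 * k)) (m : ℕ) :
    zig k i m + zig k i (m + 1) = if m % 2 = 0 then 2 * i + 1 else 2 * i := by
  rcases Nat.even_or_odd m with he | ho
  · have h1 : m % 2 = 0 := Nat.even_iff.mp he
    have h2 : (m + 1) % 2 = 1 := by omega
    have h3 : (m + 1) / 2 = m / 2 := by omega
    rw [zig, zig, if_pos h1, if_neg (by omega), if_pos h1, h3]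
    push_cast
    ring
  · have h1 : m % 2 = 1 := Nat.odd_iff.mp ho
    have h2 : (m + 1) % 2 = 0 := by omega
    have h3 : (m + 1) / 2 = m / 2 + 1 := by omega
    rw [zig, zig, if_neg (by omega), if_pos h2, if_neg (by omega), h3]
    push_cast
    ring

/-- Vertex sequence of the `i`-th near-Hamiltonian path. -/
def qfun (i : ZMod (2 * k)) : ℕ → Fin (2 * k + 1)
  | 0 => emb k i
  | 1 => inf k
  | (t + 2) => emb k (zig k i (2 * k - 1 - t))

def qList (i : ZMod (2 * k)) : List (Fin (2 * k + 1)) :=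
  (List.range (2 * k + 1)).map (qfun k i)

lemma qfun_injOn (i : ZMod (2 * k)) {m₁ m₂ : ℕ} (h₁ : m₁ < 2 * k + 1) (h₂ : m₂ < 2 * k + 1)
    (h : qfun k i m₁ = qfun k i m₂) : m₁ = m₂ := by
  have hk := NeZero.ne k
  have swap : ∀ t : ℕ, t + 2 < 2 * k + 1 → qfun k i 0 ≠ qfun k i (t + 2) := by
    intro t ht hc
    have h' : zig k i 0 = zig k i (2 * k - 1 - t) := by
      rw [zig_zero]; exact emb_inj k hc
    have := zig_injOn k i (by omega) (by omega) h'
    omega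
  match m₁, m₂ with
  | 0, 0 => rfl
  | 0, 1 => exact absurd h (emb_ne_inf k i)
  | 1, 0 => exact absurd h.symm (emb_ne_inf k i)
  | 1, 1 => rfl
  | 0, (t + 2) => exact absurd h (swap t h₂)
  | (t + 2), 0 => exact absurd h.symm (swap t h₁)
  | 1, (t + 2) => exact absurd h.symm (emb_ne_inf k _)
  | (t + 2), 1 => exact absurd h (emb_ne_inf k _)
  | (t₁ + 2), (t₂ + 2) =>
    have := zig_injOn k i (m₁ := 2 * k - 1 - t₁) (m₂ := 2 * k - 1 - t₂)
      (by omega) (by omega) (emb_inj k h)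
    omega

lemma qList_nodup (i : ZMod (2 * k)) : (qList k i).Nodup :=
  List.Nodup.map_on
    (fun m₁ hm₁ m₂ hm₂ h =>
      qfun_injOn k i (List.mem_range.mp hm₁) (List.mem_range.mp hm₂) h)
    List.nodup_range

/-- Characterization of the edges of the `i`-th path. -/
def qProp (i : ZMod (2 * k)) (e : Sym2 (Fin (2 * k + 1))) : Prop :=
  (∃ x : ZMod (2 * k), e = s(inf k, emb k x) ∧ (x = i ∨ x = i + (k : ℕ))) ∨
  (∃ a b : ZMod (2 * k), e = s(emb k a, emb k b) ∧ a ≠ b ∧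
    (a + b = 2 * i ∨ a + b = 2 * i + 1) ∧ e ≠ s(emb k i, emb k (i + 1)))

lemma qChain (i : ZMod (2 * k)) :
    List.Chain' (fun a b => qProp k i s(a, b)) (qList k i) := by
  have hk := NeZero.ne k
  rw [qList, List.Chain', List.isChain_map, List.isChain_range_succ]
  intro m hm
  match m with
  | 0 =>
    left
    exact ⟨i, Sym2.eq_swap, Or.inl rfl⟩
  | 1 =>
    left
    refine ⟨i + (k : ℕ), ?_, Or.inr rfl⟩
    show s(inf k, emb k (zig k i (2 * k - 1 - 0))) = s(inf k, emb k (i + (k : ℕ)))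
    rw [Nat.sub_zero, zig_last]
  | (t + 2) =>
    right
    have ht : t + 2 < 2 * k := hm
    have e1 : 2 * k - 1 - t = (2 * k - 2 - t) + 1 := by omega
    set m' : ℕ := 2 * k - 2 - t with hm'
    have hm'1 : 1 ≤ m' := by omega
    have hm'2 : m' + 1 < 2 * k := by omega
    refine ⟨zig k i (m' + 1), zig k i m', ?_, ?_, ?_, ?_⟩
    · show s(emb k (zig k i (2 * k - 1 - t)), emb k (zig k i (2 * k - 1 - (t + 1)))) = _
      rw [e1]
      have : 2 * k - 1 - (t + 1) = m' := by omega
      rw [this]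
    · intro hc
      have := zig_injOn k i hm'2 (by omega) hc
      omega
    · have := zig_sum k i m'
      rcases Nat.mod_two_eq_zero_or_one m' with hp | hp
      · rw [if_pos hp] at this
        right; rw [add_comm]; exact this
      · rw [if_neg (by omega)] at this
        left; rw [add_comm]; exact this
    · intro hc
      show False
      have hc' : s(emb k (zig k i (2 * k - 1 - t)), emb k (zig k i (2 * k - 1 - (t + 1)))) =
          s(emb k (zig k i 0), emb k (zig k i 1)) := by
        rw [zig_zero, zig_one]; exact hc
      rw [e1] at hc'
      have e2 : 2 * k - 1 - (t + 1) = m' := by omega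
      rw [e2] at hc'
      rcases Sym2.eq_iff.mp hc' with ⟨ha, hb⟩ | ⟨ha, hb⟩
      · have := zig_injOn k i hm'2 (by omega) (emb_inj k ha)
        omega
      · have := zig_injOn k i (by omega) (by omega) (emb_inj k hb)
        omega

/-- The extra short path `0 - 1 - ⋯ - k`. -/
def rfun (j : ℕ) : Fin (2 * k + 1) := emb k ((j : ℕ) : ZMod (2 * k))

def rList : List (Fin (2 * k + 1)) := (List.range (k + 1)).map (rfun k)

def rProp (e : Sym2 (Fin (2 * k + 1))) : Prop :=
  ∃ j : ℕ, j < k ∧ e = s(emb k ((j : ℕ) : ZMod (2 * k)), emb k ((j : ℕ) + 1))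

lemma rList_nodup : (rList k).Nodup := by
  have hk := NeZero.ne k
  refine List.Nodup.map_on ?_ List.nodup_range
  intro m₁ hm₁ m₂ hm₂ h
  rw [List.mem_range] at hm₁ hm₂
  exact cast_inj_nat k (by omega) (by omega) (emb_inj k h)

lemma rChain : List.Chain' (fun a b => rProp k s(a, b)) (rList k) := by
  rw [rList, List.Chain', List.isChain_map, List.isChain_range_succ]
  intro m hm
  refine ⟨m, hm, ?_⟩
  show s(emb k ((m : ℕ) : ZMod (2 * k)), emb k (((m + 1 : ℕ) : ZMod (2 * k)))) = _
  push_cast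
  rfl

lemma disj_qq {i₁ i₂ : ℕ} (h₁ : i₁ < k) (h₂ : i₂ < k) (hne : i₁ ≠ i₂)
    (e : Sym2 (Fin (2 * k + 1))) (hq₁ : qProp k (i₁ : ZMod (2 * k)) e)
    (hq₂ : qProp k (i₂ : ZMod (2 * k)) e) : False := by
  have hk := NeZero.ne k
  rcases hq₁ with ⟨x₁, he₁, hx₁⟩ | ⟨a₁, b₁, he₁, hab₁, hs₁, -⟩ <;>
    rcases hq₂ with ⟨x₂, he₂, hx₂⟩ | ⟨a₂, b₂, he₂, hab₂, hs₂, -⟩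
  · -- both ∞-edges
    rw [he₁] at he₂
    have hx₁' : ∃ m₁ : ℕ, m₁ < 2 * k ∧ x₁ = (m₁ : ZMod (2 * k)) ∧
        (m₁ = i₁ ∨ m₁ = i₁ + k) := by
      rcases hx₁ with rfl | rfl
      · exact ⟨i₁, by omega, rfl, Or.inl rfl⟩
      · exact ⟨i₁ + k, by omega, by push_cast; ring, Or.inr rfl⟩
    have hx₂' : ∃ m₂ : ℕ, m₂ < 2 * k ∧ x₂ = (m₂ : ZMod (2 * k)) ∧
        (m₂ = i₂ ∨ m₂ = i₂ + k) := by
      rcases hx₂ with rfl | rfl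
      · exact ⟨i₂, by omega, rfl, Or.inl rfl⟩
      · exact ⟨i₂ + k, by omega, by push_cast; ring, Or.inr rfl⟩
    obtain ⟨m₁, hm₁, rfl, hcase₁⟩ := hx₁'
    obtain ⟨m₂, hm₂, rfl, hcase₂⟩ := hx₂'
    rcases Sym2.eq_iff.mp he₂ with ⟨-, hb⟩ | ⟨ha, -⟩
    · have := cast_inj_nat k hm₁ hm₂ (emb_inj k hb)
      omega
    · exact emb_ne_inf k _ ha.symm
  · rw [he₁] at he₂
    rcases Sym2.eq_iff.mp he₂ with ⟨ha, -⟩ | ⟨ha, -⟩ <;> exact emb_ne_inf k _ ha.symm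
  · rw [he₂] at he₁
    rcases Sym2.eq_iff.mp he₁ with ⟨ha, -⟩ | ⟨ha, -⟩ <;> exact emb_ne_inf k _ ha.symm
  · -- both inner edges
    rw [he₁] at he₂
    have hsum : a₁ + b₁ = a₂ + b₂ := by
      rcases Sym2.eq_iff.mp he₂ with ⟨ha, hb⟩ | ⟨ha, hb⟩
      · rw [emb_inj k ha, emb_inj k hb]
      · rw [emb_inj k ha, emb_inj k hb]; ring
    have key : ∀ c₁ c₂ : ℕ, c₁ ≤ 1 → c₂ ≤ 1 →
        a₁ + b₁ = 2 * (i₁ : ZMod (2 * k)) + (c₁ : ℕ) →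
        a₂ + b₂ = 2 * (i₂ : ZMod (2 * k)) + (c₂ : ℕ) → False := by
      intro c₁ c₂ hc₁ hc₂ e₁ e₂
      have hcast : ((2 * i₁ + c₁ : ℕ) : ZMod (2 * k)) = ((2 * i₂ + c₂ : ℕ) : ZMod (2 * k)) := by
        push_cast
        linear_combination -e₁ + e₂ + hsum
      have := cast_inj_nat k (by omega) (by omega) hcast
      omega
    rcases hs₁ with hs₁ | hs₁ <;> rcases hs₂ with hs₂ | hs₂
    · exact key 0 0 (by omega) (by omega) (by push_cast; linear_combination hs₁)
        (by push_cast; linear_combination hs₂)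
    · exact key 0 1 (by omega) (by omega) (by push_cast; linear_combination hs₁)
        (by push_cast; linear_combination hs₂)
    · exact key 1 0 (by omega) (by omega) (by push_cast; linear_combination hs₁)
        (by push_cast; linear_combination hs₂)
    · exact key 1 1 (by omega) (by omega) (by push_cast; linear_combination hs₁)
        (by push_cast; linear_combination hs₂)

lemma disj_qr {i : ℕ} (hi : i < k) (e : Sym2 (Fin (2 * k + 1)))
    (hq : qProp k (i : ZMod (2 * k)) e) (hr : rProp k e) : False := by
  have hk := NeZero.ne k
  obtain ⟨j, hj, hej⟩ := hr
  rcases hq with ⟨x, he, -⟩ | ⟨a, b, he, hab, hs, hne⟩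
  · rw [he] at hej
    rcases Sym2.eq_iff.mp hej with ⟨ha, -⟩ | ⟨ha, -⟩ <;> exact emb_ne_inf k _ ha.symm
  · have h' : s(emb k a, emb k b) = s(emb k ((j : ℕ) : ZMod (2 * k)),
        emb k ((j : ℕ) + 1)) := he.symm.trans hej
    have hsum : a + b = 2 * ((j : ℕ) : ZMod (2 * k)) + 1 := by
      rcases Sym2.eq_iff.mp h' with ⟨ha, hb⟩ | ⟨ha, hb⟩
      · rw [emb_inj k ha, emb_inj k hb]; ring
      · rw [emb_inj k ha, emb_inj k hb]; ring
    have key : ∀ c : ℕ, c ≤ 1 → a + b = 2 * (i : ZMod (2 * k)) + (c : ℕ) →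
        2 * j + 1 = 2 * i + c := by
      intro c hc e₁
      have hcast : ((2 * j + 1 : ℕ) : ZMod (2 * k)) = ((2 * i + c : ℕ) : ZMod (2 * k)) := by
        push_cast
        linear_combination -hsum + e₁
      exact cast_inj_nat k (by omega) (by omega) hcast
    rcases hs with hs | hs
    · have := key 0 (by omega) (by push_cast; linear_combination hs)
      omega
    · have h2 := key 1 (by omega) (by push_cast; linear_combination hs)
      have : j = i := by omega
      subst this
      exact hne hej

def qTail (i : ZMod (2 * k)) : List (Fin (2 * k + 1)) :=
  (List.range (2 * k)).map (fun m => qfun k i (m + 1))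

lemma qList_eq (i : ZMod (2 * k)) : qList k i = emb k i :: qTail k i := by
  rw [qList, qTail, List.range_succ_eq_map, List.map_cons, List.map_map]
  rfl

def walkQ (i : ℕ) : Σ u v : Fin (2 * k + 1), (⊤ : SimpleGraph (Fin (2 * k + 1))).Walk u v :=
  ⟨emb k (i : ZMod (2 * k)), listWalk (emb k (i : ZMod (2 * k))) (qTail k (i : ZMod (2 * k)))⟩

lemma qTail_chain (i : ZMod (2 * k)) : List.Chain (· ≠ ·) (emb k i) (qTail k i) := by
  have h := qList_nodup k i
  rw [qList_eq] at h
  exact List.Pairwise.chain h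

lemma walkQ_isPath (i : ℕ) : (walkQ k i).2.2.IsPath :=
  listWalk_isPath _ _ (by
    show (emb k (i : ZMod (2 * k)) :: qTail k (i : ZMod (2 * k))).Nodup
    rw [← qList_eq]; exact qList_nodup k _)

lemma walkQ_length (i : ℕ) : (walkQ k i).2.2.length = 2 * k := by
  show (listWalk (emb k (i : ZMod (2 * k))) (qTail k (i : ZMod (2 * k)))).2.length = 2 * k
  rw [listWalk_length _ _ (qTail_chain k _)]
  simp [qTail]

lemma walkQ_edges (i : ℕ) :
    ∀ e ∈ (walkQ k i).2.2.edges, qProp k (i : ZMod (2 * k)) e := by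
  refine listWalk_edges_prop _ _ _ (qTail_chain k _) ?_
  have h := qChain k (i : ZMod (2 * k))
  rw [qList_eq] at h
  exact h

def rTail : List (Fin (2 * k + 1)) := (List.range k).map (fun m => rfun k (m + 1))

lemma rList_eq : rList k = rfun k 0 :: rTail k := by
  rw [rList, rTail, List.range_succ_eq_map, List.map_cons, List.map_map]
  rfl

def walkR : Σ u v : Fin (2 * k + 1), (⊤ : SimpleGraph (Fin (2 * k + 1))).Walk u v :=
  ⟨rfun k 0, listWalk (rfun k 0) (rTail k)⟩

lemma rTail_chain : List.Chain (· ≠ ·) (rfun k 0) (rTail k) := by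
  have h := rList_nodup k
  rw [rList_eq] at h
  exact List.Pairwise.chain h

lemma walkR_isPath : (walkR k).2.2.IsPath :=
  listWalk_isPath _ _ (by
    show (rfun k 0 :: rTail k).Nodup
    rw [← rList_eq]; exact rList_nodup k)

lemma walkR_length : (walkR k).2.2.length = k := by
  show (listWalk (rfun k 0) (rTail k)).2.length = k
  rw [listWalk_length _ _ (rTail_chain k)]
  simp [rTail]

lemma walkR_edges : ∀ e ∈ (walkR k).2.2.edges, rProp k e := by
  refine listWalk_edges_prop _ _ _ (rTail_chain k) ?_
  have h := rChain k
  rw [rList_eq] at h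
  exact h

lemma flat_len_aux : ∀ m : ℕ,
    ((((List.range m).map (walkQ k)).map (fun p => p.2.2.edges)).flatten).length
      = m * (2 * k) := by
  intro m
  induction m with
  | zero => simp
  | succ m ih =>
    rw [List.range_succ]
    simp only [List.map_append, List.map_cons, List.map_nil, List.flatten_append,
      List.length_append, ih]
    simp [SimpleGraph.Walk.length_edges, walkQ_length]
    ring

lemma flat_len :
    (((walkR k :: (List.range k).map (walkQ k)).map (fun p => p.2.2.edges)).flatten).length
      = 2 * k * k + k := by
  simp only [List.map_cons, List.flatten_cons, List.length_append, flat_len_aux]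
  rw [SimpleGraph.Walk.length_edges, walkR_length]
  ring

end Main
end GallaiAux

/-- A path decomposition of `G`: a list of paths such that every edge of `G`
lies in exactly one of them. -/
def IsPathDecomp {V : Type*} (G : SimpleGraph V)
    (P : List (Σ u v : V, G.Walk u v)) : Prop :=
  (∀ p ∈ P, p.2.2.IsPath) ∧
  P.Pairwise (fun p q => ∀ e, e ∈ p.2.2.edges → e ∉ q.2.2.edges) ∧
  ∀ e, e ∈ G.edgeSet ↔ ∃ p ∈ P, e ∈ p.2.2.edges

/-- Gallai's conjecture holds for complete graphs of odd order. -/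
theorem gallai_complete_odd (n : ℕ) (hn : 3 ≤ n) (hodd : Odd n) :
    ∃ P : List (Σ u v : Fin n, (⊤ : SimpleGraph (Fin n)).Walk u v),
      IsPathDecomp ⊤ P ∧ P.length ≤ (n + 1) / 2 := by
  classical
  obtain ⟨k, rfl⟩ := hodd
  rw [show 2 * k + 1 = 2 * k + 1 from rfl] at *
  haveI : NeZero k := ⟨by omega⟩
  set P : List (Σ u v : Fin (2 * k + 1), (⊤ : SimpleGraph (Fin (2 * k + 1))).Walk u v) :=
    GallaiAux.walkR k :: (List.range k).map (GallaiAux.walkQ k) with hP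
  have hpath : ∀ p ∈ P, p.2.2.IsPath := by
    intro p hp
    rcases List.mem_cons.mp hp with rfl | hp
    · exact GallaiAux.walkR_isPath k
    · obtain ⟨i, -, rfl⟩ := List.mem_map.mp hp
      exact GallaiAux.walkQ_isPath k i
  have hpair : P.Pairwise (fun p q => ∀ e, e ∈ p.2.2.edges → e ∉ q.2.2.edges) := by
    rw [hP]
    refine List.pairwise_cons.mpr ⟨?_, ?_⟩
    · intro q hq e he₁ he₂
      obtain ⟨i, hi, rfl⟩ := List.mem_map.mp hq
      exact GallaiAux.disj_qr k (List.mem_range.mp hi) e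
        (GallaiAux.walkQ_edges k i e he₂) (GallaiAux.walkR_edges k e he₁)
    · rw [List.pairwise_map]
      refine List.Pairwise.imp_of_mem ?_ List.pairwise_lt_range
      intro i j hi hj hlt e he₁ he₂
      exact GallaiAux.disj_qq k (List.mem_range.mp hi) (List.mem_range.mp hj)
        (Nat.ne_of_lt hlt) e (GallaiAux.walkQ_edges k i e he₁)
        (GallaiAux.walkQ_edges k j e he₂)
  have hnodup : ((P.map (fun p => p.2.2.edges)).flatten).Nodup := by
    rw [List.nodup_flatten]
    constructor
    · intro l hl
      obtain ⟨p, hp, rfl⟩ := List.mem_map.mp hl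
      exact ((hpath p hp).isTrail).edges_nodup
    · rw [List.pairwise_map]
      refine hpair.imp ?_
      intro p q h
      intro e he
      exact h e he
  have hcard : (⊤ : SimpleGraph (Fin (2 * k + 1))).edgeFinset.card = 2 * k * k + k := by
    rw [SimpleGraph.card_edgeFinset_top_eq_card_choose_two, Fintype.card_fin,
      Nat.choose_two_right]
    have h1 : 2 * k + 1 - 1 = 2 * k := by omega
    have h2 : (2 * k + 1) * (2 * k) = (2 * k * k + k) * 2 := by ring
    rw [h1, h2, Nat.mul_div_cancel _ (by norm_num)]
  have hsub : ((P.map (fun p => p.2.2.edges)).flatten).toFinset ⊆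
      (⊤ : SimpleGraph (Fin (2 * k + 1))).edgeFinset := by
    intro e he
    rw [List.mem_toFinset, List.mem_flatten] at he
    obtain ⟨l, hl, hel⟩ := he
    obtain ⟨p, hp, rfl⟩ := List.mem_map.mp hl
    exact SimpleGraph.mem_edgeFinset.mpr (p.2.2.edges_subset_edgeSet hel)
  have heq : ((P.map (fun p => p.2.2.edges)).flatten).toFinset =
      (⊤ : SimpleGraph (Fin (2 * k + 1))).edgeFinset := by
    refine Finset.eq_of_subset_of_card_le hsub ?_
    rw [hcard, List.toFinset_card_of_nodup hnodup, hP, GallaiAux.flat_len]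
  refine ⟨P, ⟨hpath, hpair, ?_⟩, ?_⟩
  · intro e
    constructor
    · intro he
      have h1 : e ∈ ((P.map (fun p => p.2.2.edges)).flatten).toFinset := by
        rw [heq]
        exact SimpleGraph.mem_edgeFinset.mpr he
      rw [List.mem_toFinset, List.mem_flatten] at h1
      obtain ⟨l, hl, hel⟩ := h1
      obtain ⟨p, hp, rfl⟩ := List.mem_map.mp hl
      exact ⟨p, hp, hel⟩
    · rintro ⟨p, hp, hep⟩
      exact p.2.2.edges_subset_edgeSet hep
  · rw [hP]
    simp
    omega
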